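/- If char(k) ≠ 2 then the algebra A₍t₎ = k⟨α,β⟩/(J³, α² - β², αβ - tα², βα - tβ²) with t² = 1 (where J is the ideal generated by α,β) is not a symmetric algebra; in fact the element α - tβ lies in the socle of A₍t₎ but not in the two-sided socle relations, contradicting symmetry. Concretely: in A₍t₎ the element α - tβ satisfies (α - tβ)·J = J·(α - tβ) = 0 while α - tβ ∉ J². -/

import Mathlib

open scoped Pointwise

/-- Relations defining `A_t = k⟨α,β⟩/(J³, α² - β², αβ - tα², βα - tβ²)`, where `α, β` are the
two generators of the free algebra and `J = (α, β)`; killing all products of three generators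
kills `J³`. -/
inductive AtRel (K : Type*) [Field K] (t : K) :
    FreeAlgebra K (Fin 2) → FreeAlgebra K (Fin 2) → Prop
  | sq : AtRel K t (FreeAlgebra.ι K 0 * FreeAlgebra.ι K 0)
      (FreeAlgebra.ι K 1 * FreeAlgebra.ι K 1)
  | ab : AtRel K t (FreeAlgebra.ι K 0 * FreeAlgebra.ι K 1)
      (t • (FreeAlgebra.ι K 0 * FreeAlgebra.ι K 0))
  | ba : AtRel K t (FreeAlgebra.ι K 1 * FreeAlgebra.ι K 0)
      (t • (FreeAlgebra.ι K 1 * FreeAlgebra.ι K 1))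
  | cube (i j l : Fin 2) :
      AtRel K t (FreeAlgebra.ι K i * FreeAlgebra.ι K j * FreeAlgebra.ι K l) 0

/-- If `char k ≠ 2` and `t² = 1`, then in `A_t` the element `α - tβ` annihilates the ideal
`J = (α, β)` on both sides (so lies in the socle) while not lying in
`J² = span{α², αβ, βα, β²}`; consequently `A_t` is not a symmetric algebra. -/
theorem stmt_4 (K : Type*) [Field K] (hchar : (2 : K) ≠ 0) (t : K) (ht : t ^ 2 = 1)
    (A : Type*) [Ring A] [Algebra K A] (e : RingQuot (AtRel K t) ≃ₐ[K] A)
    (a b : A) (ha : a = e (RingQuot.mkAlgHom K (AtRel K t) (FreeAlgebra.ι K 0)))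
    (hb : b = e (RingQuot.mkAlgHom K (AtRel K t) (FreeAlgebra.ι K 1))) :
    (∀ x ∈ TwoSidedIdeal.span ({a, b} : Set A), (a - t • b) * x = 0 ∧ x * (a - t • b) = 0) ∧
    (a - t • b) ∉ Submodule.span K ({a * a, a * b, b * a, b * b} : Set A) ∧
    ¬ ∃ φ : A →ₗ[K] K, (∀ x y : A, φ (x * y) = φ (y * x)) ∧
        (∀ x : A, x ≠ 0 → ∃ y, φ (x * y) ≠ 0) := by
  classical
  have htt : t * t = 1 := by rw [← sq]; exact ht
  set s : A := a - t • b with hs_def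
  -- The canonical surjection from the free algebra.
  let F : FreeAlgebra K (Fin 2) →ₐ[K] A :=
    (e : RingQuot (AtRel K t) ≃ₐ[K] A).toAlgHom.comp (RingQuot.mkAlgHom K (AtRel K t))
  have hFdef : ∀ x, F x = e (RingQuot.mkAlgHom K (AtRel K t) x) := fun _ => rfl
  have hrel : ∀ {x y}, AtRel K t x y → F x = F y := fun h =>
    congrArg e (RingQuot.mkAlgHom_rel K h)
  have hFa : F (FreeAlgebra.ι K 0) = a := ha.symm
  have hFb : F (FreeAlgebra.ι K 1) = b := hb.symm
  -- basic relations in A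
  have hbb : b * b = a * a := by
    have h := hrel AtRel.sq
    rw [map_mul, map_mul, hFa, hFb] at h
    exact h.symm
  have hab : a * b = t • (a * a) := by
    have h := hrel AtRel.ab
    rwa [map_mul, map_smul, map_mul, hFa, hFb] at h
  have hba : b * a = t • (a * a) := by
    have h := hrel AtRel.ba
    rwa [map_mul, map_smul, map_mul, hFa, hFb, hbb] at h
  have hcube : ∀ i j l : Fin 2,
      F (FreeAlgebra.ι K i) * F (FreeAlgebra.ι K j) * F (FreeAlgebra.ι K l) = 0 := by
    intro i j l
    have h := hrel (AtRel.cube i j l)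
    rwa [map_mul, map_mul, map_zero] at h
  have hqa : a * a * a = 0 := by have h := hcube 0 0 0; rwa [hFa] at h
  have hqb : a * a * b = 0 := by have h := hcube 0 0 1; rwa [hFa, hFb] at h
  have haq : a * (a * a) = 0 := by rw [← mul_assoc]; exact hqa
  have hbq : b * (a * a) = 0 := by rw [← mul_assoc, hba, smul_mul_assoc, hqa, smul_zero]
  have hqq : a * a * (a * a) = 0 := by rw [← mul_assoc, hqa, zero_mul]
  -- A is spanned by 1, a, b, a*a
  have hFsurj : Function.Surjective F := by
    intro y
    obtain ⟨z, hz⟩ := RingQuot.mkAlgHom_surjective K (AtRel K t) (e.symm y)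
    exact ⟨z, by rw [hFdef, hz, AlgEquiv.apply_symm_apply]⟩
  have hspan : ∀ y : A, ∃ c₀ c₁ c₂ c₃ : K,
      y = c₀ • (1 : A) + c₁ • a + c₂ • b + c₃ • (a * a) := by
    intro y
    obtain ⟨w, rfl⟩ := hFsurj y
    induction w using FreeAlgebra.induction with
    | grade0 r =>
      exact ⟨r, 0, 0, 0, by simp [Algebra.algebraMap_eq_smul_one]⟩
    | grade1 i =>
      fin_cases i
      · exact ⟨0, 1, 0, 0, by simp [hFa]⟩
      · exact ⟨0, 0, 1, 0, by simp [hFb]⟩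
    | add x y hx hy =>
      obtain ⟨c₀, c₁, c₂, c₃, hc⟩ := hx
      obtain ⟨d₀, d₁, d₂, d₃, hd⟩ := hy
      refine ⟨c₀ + d₀, c₁ + d₁, c₂ + d₂, c₃ + d₃, ?_⟩
      rw [map_add, hc, hd]
      module
    | mul x y hx hy =>
      obtain ⟨c₀, c₁, c₂, c₃, hc⟩ := hx
      obtain ⟨d₀, d₁, d₂, d₃, hd⟩ := hy
      refine ⟨c₀ * d₀, c₀ * d₁ + c₁ * d₀, c₀ * d₂ + c₂ * d₀,
        c₀ * d₃ + c₃ * d₀ + c₁ * d₁ + t * (c₁ * d₂) + t * (c₂ * d₁) + c₂ * d₂, ?_⟩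
      rw [map_mul, hc, hd]
      simp only [mul_add, add_mul, smul_mul_assoc, mul_smul_comm, one_mul, mul_one,
        hab, hba, hbb, hqa, hqb, haq, hbq, hqq, smul_zero, smul_smul, add_zero, zero_add]
      module
  -- s kills the generators on both sides
  have hsa : s * a = 0 := by
    rw [hs_def, sub_mul, smul_mul_assoc, hba, smul_smul, htt, one_smul, sub_self]
  have hsb : s * b = 0 := by
    rw [hs_def, sub_mul, smul_mul_assoc, hab, hbb, sub_self]
  have hsq : s * (a * a) = 0 := by
    rw [hs_def, sub_mul, smul_mul_assoc, haq, hbq, smul_zero, sub_zero]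
  have has : a * s = 0 := by
    rw [hs_def, mul_sub, mul_smul_comm, hab, smul_smul, htt, one_smul, sub_self]
  have hbs : b * s = 0 := by
    rw [hs_def, mul_sub, mul_smul_comm, hba, hbb, sub_self]
  have hqs : a * a * s = 0 := by
    rw [hs_def, mul_sub, mul_smul_comm, hqa, hqb, smul_zero, sub_zero]
  have hmulrep : ∀ y : A, ∃ c : K, s * y = c • s ∧ y * s = c • s := by
    intro y
    obtain ⟨c₀, c₁, c₂, c₃, rfl⟩ := hspan y
    refine ⟨c₀, ?_, ?_⟩
    · rw [mul_add, mul_add, mul_add, mul_smul_comm, mul_smul_comm, mul_smul_comm, mul_smul_comm,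
        hsa, hsb, hsq, mul_one, smul_zero, smul_zero, smul_zero, add_zero, add_zero, add_zero]
    · rw [add_mul, add_mul, add_mul, smul_mul_assoc, smul_mul_assoc, smul_mul_assoc,
        smul_mul_assoc, has, hbs, hqs, one_mul, smul_zero, smul_zero, smul_zero, add_zero,
        add_zero, add_zero]
  -- Part 1
  have part1 : ∀ z ∈ TwoSidedIdeal.span ({a, b} : Set A), s * z = 0 ∧ z * s = 0 := by
    let I : TwoSidedIdeal A := TwoSidedIdeal.mk'
      {z | s * z = 0 ∧ z * s = 0}
      ⟨mul_zero s, zero_mul s⟩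
      (fun {u v} hu hv => ⟨by rw [mul_add, hu.1, hv.1, add_zero],
                           by rw [add_mul, hu.2, hv.2, add_zero]⟩)
      (fun {u} hu => ⟨by rw [mul_neg, hu.1, neg_zero],
                      by rw [neg_mul, hu.2, neg_zero]⟩)
      (fun {u v} hv => by
        obtain ⟨c, hc1, hc2⟩ := hmulrep u
        exact ⟨by rw [← mul_assoc, hc1, smul_mul_assoc, hv.1, smul_zero],
               by rw [mul_assoc, hv.2, mul_zero]⟩)
      (fun {u v} hu => by
        obtain ⟨c, hc1, hc2⟩ := hmulrep v
        exact ⟨by rw [← mul_assoc, hu.1, zero_mul],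
               by rw [mul_assoc, hc2, mul_smul_comm, hu.2, smul_zero]⟩)
    have hIiff : ∀ w : A, w ∈ I ↔ (s * w = 0 ∧ w * s = 0) := fun w =>
      TwoSidedIdeal.mem_mk' {z : A | s * z = 0 ∧ z * s = 0} _ _ _ _ _ w
    intro z hz
    have hmem : z ∈ I := TwoSidedIdeal.mem_span_iff.mp hz I (by
      rintro w (rfl | rfl)
      · exact (hIiff _).mpr ⟨hsa, has⟩
      · exact (hIiff _).mpr ⟨hsb, hbs⟩)
    exact (hIiff z).mp hmem
  -- The 4-dimensional matrix model
  have h01 : (0 : Fin 4) ≠ 1 := by decide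
  have h02 : (0 : Fin 4) ≠ 2 := by decide
  have h03 : (0 : Fin 4) ≠ 3 := by decide
  have h12 : (1 : Fin 4) ≠ 2 := by decide
  have h13 : (1 : Fin 4) ≠ 3 := by decide
  have h21 : (2 : Fin 4) ≠ 1 := by decide
  have h23 : (2 : Fin 4) ≠ 3 := by decide
  set Ma : Matrix (Fin 4) (Fin 4) K :=
    Matrix.single 1 0 1 + Matrix.single 3 1 1 + Matrix.single 3 2 t
    with hMa_def
  set Mb : Matrix (Fin 4) (Fin 4) K :=
    Matrix.single 2 0 1 + Matrix.single 3 1 t + Matrix.single 3 2 1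
    with hMb_def
  set E : Matrix (Fin 4) (Fin 4) K := Matrix.single 3 0 1 with hE_def
  have hMaa : Ma * Ma = E := by
    rw [hMa_def, hE_def]
    simp [add_mul, mul_add, Matrix.single_mul_single_same,
      Matrix.single_mul_single_of_ne, h01, h02, h03, h12, h13, h21, h23]
  have hMbb : Mb * Mb = E := by
    rw [hMb_def, hE_def]
    simp [add_mul, mul_add, Matrix.single_mul_single_same,
      Matrix.single_mul_single_of_ne, h01, h02, h03, h12, h13, h21, h23]
  have hMab : Ma * Mb = t • E := by
    rw [hMa_def, hMb_def, hE_def]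
    simp [add_mul, mul_add, Matrix.single_mul_single_same,
      Matrix.single_mul_single_of_ne, h01, h02, h03, h12, h13, h21, h23]
  have hMba : Mb * Ma = t • E := by
    rw [hMa_def, hMb_def, hE_def]
    simp [add_mul, mul_add, Matrix.single_mul_single_same,
      Matrix.single_mul_single_of_ne, h01, h02, h03, h12, h13, h21, h23]
  have hEa : E * Ma = 0 := by
    rw [hMa_def, hE_def]
    simp [add_mul, mul_add, Matrix.single_mul_single_of_ne, h01, h03]
  have hEb : E * Mb = 0 := by
    rw [hMb_def, hE_def]
    simp [add_mul, mul_add, Matrix.single_mul_single_of_ne, h02, h03]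
  let M : Fin 2 → Matrix (Fin 4) (Fin 4) K := ![Ma, Mb]
  let fM : FreeAlgebra K (Fin 2) →ₐ[K] Matrix (Fin 4) (Fin 4) K := FreeAlgebra.lift K M
  have hfM0 : fM (FreeAlgebra.ι K 0) = Ma := by
    simp [fM, M, FreeAlgebra.lift_ι_apply]
  have hfM1 : fM (FreeAlgebra.ι K 1) = Mb := by
    simp [fM, M, FreeAlgebra.lift_ι_apply]
  have hE : ∀ l : Fin 2, E * fM (FreeAlgebra.ι K l) = 0 := by
    intro l
    fin_cases l
    · show E * fM (FreeAlgebra.ι K 0) = 0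
      rw [hfM0, hEa]
    · show E * fM (FreeAlgebra.ι K 1) = 0
      rw [hfM1, hEb]
  have hprod : ∀ i j : Fin 2, ∃ c : K,
      fM (FreeAlgebra.ι K i) * fM (FreeAlgebra.ι K j) = c • E := by
    intro i j
    fin_cases i <;> fin_cases j
    · exact ⟨1, by show fM (FreeAlgebra.ι K 0) * fM (FreeAlgebra.ι K 0) = (1 : K) • E
                   rw [hfM0, hMaa, one_smul]⟩
    · exact ⟨t, by show fM (FreeAlgebra.ι K 0) * fM (FreeAlgebra.ι K 1) = t • E
                   rw [hfM0, hfM1, hMab]⟩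
    · exact ⟨t, by show fM (FreeAlgebra.ι K 1) * fM (FreeAlgebra.ι K 0) = t • E
                   rw [hfM1, hfM0, hMba]⟩
    · exact ⟨1, by show fM (FreeAlgebra.ι K 1) * fM (FreeAlgebra.ι K 1) = (1 : K) • E
                   rw [hfM1, hMbb, one_smul]⟩
  have hMrel : ∀ ⦃x y⦄, AtRel K t x y → fM x = fM y := by
    intro x y h
    induction h with
    | sq => rw [map_mul, map_mul, hfM0, hfM1, hMaa, hMbb]
    | ab => rw [map_mul, map_smul, map_mul, hfM0, hfM1, hMab, hMaa]
    | ba => rw [map_mul, map_smul, map_mul, hfM0, hfM1, hMba, hMbb]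
    | cube i j l =>
      rw [map_zero, map_mul, map_mul]
      obtain ⟨c, hc⟩ := hprod i j
      rw [hc, smul_mul_assoc, hE l, smul_zero]
  let Φ : A →ₐ[K] Matrix (Fin 4) (Fin 4) K :=
    (RingQuot.liftAlgHom K ⟨fM, hMrel⟩).comp e.symm.toAlgHom
  have hΦa : Φ a = Ma := by
    rw [ha]
    show (RingQuot.liftAlgHom K ⟨fM, hMrel⟩)
      (e.symm (e (RingQuot.mkAlgHom K (AtRel K t) (FreeAlgebra.ι K 0)))) = Ma
    rw [AlgEquiv.symm_apply_apply, RingQuot.liftAlgHom_mkAlgHom_apply]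
    exact hfM0
  have hΦb : Φ b = Mb := by
    rw [hb]
    show (RingQuot.liftAlgHom K ⟨fM, hMrel⟩)
      (e.symm (e (RingQuot.mkAlgHom K (AtRel K t) (FreeAlgebra.ι K 1)))) = Mb
    rw [AlgEquiv.symm_apply_apply, RingQuot.liftAlgHom_mkAlgHom_apply]
    exact hfM1
  have hΦq : Φ (a * a) = E := by rw [map_mul, hΦa, hMaa]
  have hq_ne : a * a ≠ 0 := by
    intro h
    have h0 : (E : Matrix (Fin 4) (Fin 4) K) = 0 := by rw [← hΦq, h, map_zero]
    have h2 := congrFun (congrFun h0 3) 0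
    rw [hE_def] at h2
    simp [Matrix.single_apply_same] at h2
  -- Part 2
  have part2 : s ∉ Submodule.span K ({a * a, a * b, b * a, b * b} : Set A) := by
    intro hmem
    have hsub : ({a * a, a * b, b * a, b * b} : Set A)
        ⊆ (Submodule.span K {a * a} : Submodule K A) := by
      rintro x (rfl | rfl | rfl | rfl)
      · exact Submodule.mem_span_singleton_self _
      · rw [hab]; exact Submodule.smul_mem _ _ (Submodule.mem_span_singleton_self _)
      · rw [hba]; exact Submodule.smul_mem _ _ (Submodule.mem_span_singleton_self _)
      · rw [hbb]; exact Submodule.mem_span_singleton_self _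
    have hs' := Submodule.span_le.mpr hsub hmem
    rw [Submodule.mem_span_singleton] at hs'
    obtain ⟨c, hc⟩ := hs'
    have h2 := congrArg Φ hc
    rw [map_smul, hΦq, hs_def, map_sub, map_smul, hΦa, hΦb] at h2
    have h4 := congrFun (congrFun h2 1) 0
    rw [hMa_def, hMb_def, hE_def] at h4
    simp [Matrix.single_apply_same, Matrix.single_apply_of_ne,
      Matrix.add_apply, Matrix.sub_apply, Matrix.smul_apply, h01, h03, h13, h21, h23,
      h02, h12] at h4
  refine ⟨part1, part2, ?_⟩
  -- Part 3
  rintro ⟨φ, hsym, hnd⟩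
  obtain ⟨y, hy⟩ := hnd (a * a) hq_ne
  obtain ⟨c₀, c₁, c₂, c₃, rfl⟩ := hspan y
  have hqy : a * a * (c₀ • (1 : A) + c₁ • a + c₂ • b + c₃ • (a * a)) = c₀ • (a * a) := by
    rw [mul_add, mul_add, mul_add, mul_smul_comm, mul_smul_comm, mul_smul_comm, mul_smul_comm,
      hqa, hqb, hqq, mul_one, smul_zero, smul_zero, smul_zero, add_zero, add_zero, add_zero]
  rw [hqy, map_smul] at hy
  have hr : φ (a * a) ≠ 0 := by
    intro h0
    rw [h0, smul_zero] at hy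
    exact hy rfl
  set x : A := s - (φ s / φ (a * a)) • (a * a) with hx_def
  have hxne : x ≠ 0 := by
    intro h0
    apply part2
    have hseq : s = (φ s / φ (a * a)) • (a * a) := by
      rw [← sub_eq_zero]; rw [hx_def] at h0; exact h0
    rw [hseq]
    exact Submodule.smul_mem _ _ (Submodule.subset_span (by left; rfl))
  have hφx : φ x = 0 := by
    rw [hx_def, map_sub, map_smul, smul_eq_mul, div_mul_cancel₀ _ hr, sub_self]
  have hxa : x * a = 0 := by
    rw [hx_def, sub_mul, smul_mul_assoc, hsa, hqa, smul_zero, sub_zero]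
  have hxb : x * b = 0 := by
    rw [hx_def, sub_mul, smul_mul_assoc, hsb, hqb, smul_zero, sub_zero]
  have hxq : x * (a * a) = 0 := by
    rw [hx_def, sub_mul, smul_mul_assoc, hsq, hqq, smul_zero, sub_zero]
  obtain ⟨y2, hy2⟩ := hnd x hxne
  obtain ⟨d₀, d₁, d₂, d₃, rfl⟩ := hspan y2
  have hxy : x * (d₀ • (1 : A) + d₁ • a + d₂ • b + d₃ • (a * a)) = d₀ • x := by
    rw [mul_add, mul_add, mul_add, mul_smul_comm, mul_smul_comm, mul_smul_comm, mul_smul_comm,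
      hxa, hxb, hxq, mul_one, smul_zero, smul_zero, smul_zero, add_zero, add_zero, add_zero]
  rw [hxy, map_smul, hφx, smul_zero] at hy2
  exact hy2 rfl
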